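/- Let n ≥ 1, let I_1, I_2 be disjoint nonempty subsets of {1,…,n} with |I_1| = d_1 and |I_2| = d_2, and let Φ^{I_1,I_2} := {±(e_i − e_j) : i ≠ j, both in I_1 or both in I_2} ∪ {±(e_i + e_j) : i ∈ I_1, j ∈ I_2}. Set v := Σ_{i∈I_1} e_i − Σ_{i∈I_2} e_i. Then {u ∈ ℝ^n : u_i = 0 for all i ∉ I_1 ∪ I_2, and ⟨u,α⟩ = 0 for all α ∈ Φ^{I_1,I_2}} = ℝ·v; consequently the linear span of Φ^{I_1,I_2} has dimension d_1 + d_2 − 1. -/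

import Mathlib

open Finset

noncomputable section

/-- Standard basis vector `e i` of `ℝ^n`. -/
def E {n : ℕ} (i : Fin n) : Fin n → ℝ := Pi.single i 1

/-- Standard inner product on `ℝ^n`. -/
def dot {n : ℕ} (v w : Fin n → ℝ) : ℝ := ∑ i, v i * w i

/-- Reflection across the hyperplane orthogonal to `α`. -/
def reflRoot {n : ℕ} (α v : Fin n → ℝ) : Fin n → ℝ := v - (2 * dot v α / dot α α) • α

/-- The root system `A_{n-1}`. -/
def Aset (n : ℕ) : Set (Fin n → ℝ) := {α | ∃ i j : Fin n, i ≠ j ∧ α = E i - E j}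

/-- The root system `D_n`. -/
def Dset (n : ℕ) : Set (Fin n → ℝ) :=
  {α | ∃ i j : Fin n, i ≠ j ∧ (α = E i - E j ∨ α = E i + E j ∨ α = -(E i + E j))}

/-- The root system `B_n`. -/
def Bset (n : ℕ) : Set (Fin n → ℝ) := Dset n ∪ {α | ∃ i : Fin n, α = E i ∨ α = -E i}

/-- The root system `C_n`. -/
def Cset (n : ℕ) : Set (Fin n → ℝ) :=
  Dset n ∪ {α | ∃ i : Fin n, α = (2:ℝ) • E i ∨ α = -((2:ℝ) • E i)}

/-- The nonreduced root system `BC_n`. -/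
def BCset (n : ℕ) : Set (Fin n → ℝ) := Bset n ∪ Cset n

/-- The system `Φ^{I₁,I₂}` of the bipartite graph `𝒢^{d₁,d₂}`. -/
def PhiBip {n : ℕ} (I1 I2 : Finset (Fin n)) : Set (Fin n → ℝ) :=
  {α | (∃ i ∈ I1, ∃ j ∈ I1, i ≠ j ∧ α = E i - E j) ∨
       (∃ i ∈ I2, ∃ j ∈ I2, i ≠ j ∧ α = E i - E j) ∨
       (∃ i ∈ I1, ∃ j ∈ I2, α = E i + E j ∨ α = -(E i + E j))}

section Aux

lemma dot_E {n : ℕ} (u : Fin n → ℝ) (i : Fin n) : dot u (E i) = u i := by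
  simp [dot, E, Pi.single_apply, mul_ite]

lemma dot_sub' {n : ℕ} (u a b : Fin n → ℝ) : dot u (a - b) = dot u a - dot u b := by
  simp [dot, mul_sub, Finset.sum_sub_distrib]

lemma dot_add' {n : ℕ} (u a b : Fin n → ℝ) : dot u (a + b) = dot u a + dot u b := by
  simp [dot, mul_add, Finset.sum_add_distrib]

lemma dot_neg' {n : ℕ} (u a : Fin n → ℝ) : dot u (-a) = - dot u a := by
  simp [dot]

lemma dot_comm {n : ℕ} (u w : Fin n → ℝ) : dot u w = dot w u := by
  simp [dot, mul_comm]

lemma dot_smul_left {n : ℕ} (c : ℝ) (u w : Fin n → ℝ) : dot (c • u) w = c * dot u w := by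
  simp [dot, Finset.mul_sum, mul_assoc]

lemma dot_add_left {n : ℕ} (a b w : Fin n → ℝ) : dot (a + b) w = dot a w + dot b w := by
  simp [dot, add_mul, Finset.sum_add_distrib]

lemma dot_sum_right {n : ℕ} (u : Fin n → ℝ) (T : Finset (Fin n)) :
    dot u (∑ i ∈ T, E i) = ∑ i ∈ T, u i := by
  simp only [dot, Finset.sum_apply, Finset.mul_sum]
  rw [Finset.sum_comm]
  simp [E, Pi.single_apply, mul_ite]

lemma E_li {n : ℕ} : LinearIndependent ℝ (E (n := n)) := by
  have h : (E (n := n)) = ⇑(Pi.basisFun ℝ (Fin n)) := by funext i; simp [E]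
  rw [h]
  exact (Pi.basisFun ℝ (Fin n)).linearIndependent

lemma E_inj {n : ℕ} : Function.Injective (E (n := n)) := E_li.injective

/-- The linear functional `u ↦ dot u v`. -/
def dotL {n : ℕ} (v : Fin n → ℝ) : (Fin n → ℝ) →ₗ[ℝ] ℝ where
  toFun u := dot u v
  map_add' a b := dot_add_left a b v
  map_smul' c a := by simp [dot_smul_left]

end Aux

/-- Within the span of the coordinates of `I₁ ∪ I₂`, the orthogonal complement of
`Φ^{I₁,I₂}` is the line through `v = ∑_{I₁} e_i - ∑_{I₂} e_i`; hence `Φ^{I₁,I₂}` has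
rank `d₁ + d₂ - 1`. -/

theorem stmt7 (n : ℕ) (hn : 1 ≤ n) (I1 I2 : Finset (Fin n)) (hd : Disjoint I1 I2)
    (h1 : I1.Nonempty) (h2 : I2.Nonempty)
    (v : Fin n → ℝ) (hv : v = (∑ i ∈ I1, E i) - (∑ i ∈ I2, E i)) :
    {u : Fin n → ℝ | (∀ i, i ∉ I1 ∪ I2 → u i = 0) ∧ ∀ α ∈ PhiBip I1 I2, dot u α = 0} =
      {u : Fin n → ℝ | ∃ c : ℝ, u = c • v} ∧
    Module.finrank ℝ (Submodule.span ℝ (PhiBip I1 I2)) = I1.card + I2.card - 1 := by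
  obtain ⟨i0, hi0⟩ := h1
  have hvS : ∀ i, i ∉ I1 ∪ I2 → v i = 0 := by
    intro i hi
    rw [Finset.mem_union, not_or] at hi
    simp [hv, Finset.sum_apply, E, Pi.single_apply, Finset.sum_ite_eq, hi.1, hi.2]
  have hv1 : ∀ i ∈ I1, v i = 1 := by
    intro i hi
    have hi2 : i ∉ I2 := Finset.disjoint_left.mp hd hi
    simp [hv, Finset.sum_apply, E, Pi.single_apply, Finset.sum_ite_eq, hi, hi2]
  have hv2 : ∀ i ∈ I2, v i = -1 := by
    intro i hi
    have hi1 : i ∉ I1 := Finset.disjoint_right.mp hd hi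
    simp [hv, Finset.sum_apply, E, Pi.single_apply, Finset.sum_ite_eq, hi, hi1]
  have hdv : ∀ α ∈ PhiBip I1 I2, dot v α = 0 := by
    rintro α (⟨i, hi, j, hj, hij, rfl⟩ | ⟨i, hi, j, hj, hij, rfl⟩ | ⟨i, hi, j, hj, (rfl | rfl)⟩)
    · rw [dot_sub', dot_E, dot_E, hv1 i hi, hv1 j hj, sub_self]
    · rw [dot_sub', dot_E, dot_E, hv2 i hi, hv2 j hj, sub_self]
    · rw [dot_add', dot_E, dot_E, hv1 i hi, hv2 j hj]; ring
    · rw [dot_neg', dot_add', dot_E, dot_E, hv1 i hi, hv2 j hj]; ring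
  constructor
  · -- set equality
    ext u
    simp only [Set.mem_setOf_eq]
    constructor
    · rintro ⟨h0, hΦ⟩
      refine ⟨u i0, ?_⟩
      funext i
      rw [Pi.smul_apply, smul_eq_mul]
      by_cases hi1 : i ∈ I1
      · rw [hv1 i hi1, mul_one]
        by_cases hii : i = i0
        · rw [hii]
        · have := hΦ (E i - E i0) (Or.inl ⟨i, hi1, i0, hi0, hii, rfl⟩)
          rw [dot_sub', dot_E, dot_E] at this
          linarith
      · by_cases hi2 : i ∈ I2
        · have := hΦ (E i0 + E i) (Or.inr (Or.inr ⟨i0, hi0, i, hi2, Or.inl rfl⟩))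
          rw [dot_add', dot_E, dot_E] at this
          rw [hv2 i hi2]
          linarith
        · rw [h0 i (by simp [hi1, hi2]), hvS i (by simp [hi1, hi2]), mul_zero]
    · rintro ⟨c, rfl⟩
      exact ⟨fun i hi => by simp [hvS i hi],
        fun α hα => by rw [dot_smul_left, hdv α hα, mul_zero]⟩
  · -- rank computation
    classical
    set s : Finset (Fin n → ℝ) := (I1 ∪ I2).image E with hs
    set W : Submodule ℝ (Fin n → ℝ) := Submodule.span ℝ (s : Set (Fin n → ℝ)) with hW
    have hEW : ∀ k ∈ I1 ∪ I2, E k ∈ W := fun k hk =>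
      Submodule.subset_span (Finset.mem_coe.mpr (Finset.mem_image_of_mem E hk))
    have hWsupp : ∀ u ∈ W, ∀ i, i ∉ I1 ∪ I2 → u i = 0 := by
      intro u hu i hi
      set Z : Submodule ℝ (Fin n → ℝ) :=
        { carrier := {w | ∀ j, j ∉ I1 ∪ I2 → w j = 0}
          add_mem' := fun ha hb j hj => by simp [ha j hj, hb j hj]
          zero_mem' := fun j _ => rfl
          smul_mem' := fun c w hw j hj => by simp [hw j hj] } with hZ
      have hle : W ≤ Z := by
        rw [hW]
        apply Submodule.span_le.mpr
        intro α hα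
        simp only [hs, Finset.coe_image, Set.mem_image, Finset.mem_coe] at hα
        obtain ⟨k, hk, rfl⟩ := hα
        intro j hj
        have hne : j ≠ k := by rintro rfl; exact hj hk
        exact Pi.single_eq_of_ne hne 1
      exact hle hu i hi
    have hspan : Submodule.span ℝ (PhiBip I1 I2) = W ⊓ LinearMap.ker (dotL v) := by
      apply le_antisymm
      · apply Submodule.span_le.mpr
        intro α hα
        have hker : α ∈ LinearMap.ker (dotL v) := by
          simp only [LinearMap.mem_ker]
          show dot α v = 0
          rw [dot_comm]
          exact hdv α hα
        refine Submodule.mem_inf.mpr ⟨?_, hker⟩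
        rcases hα with ⟨i, hi, j, hj, hij, rfl⟩ | ⟨i, hi, j, hj, hij, rfl⟩ |
          ⟨i, hi, j, hj, (rfl | rfl)⟩
        · exact sub_mem (hEW i (by simp [hi])) (hEW j (by simp [hj]))
        · exact sub_mem (hEW i (by simp [hi])) (hEW j (by simp [hj]))
        · exact add_mem (hEW i (by simp [hi])) (hEW j (by simp [hj]))
        · exact neg_mem (add_mem (hEW i (by simp [hi])) (hEW j (by simp [hj])))
      · intro u hu
        obtain ⟨huW, huk⟩ := Submodule.mem_inf.mp hu
        have hsupp : ∀ i, i ∉ I1 ∪ I2 → u i = 0 := hWsupp u huW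
        have hker : dot u v = 0 := huk
        have hsum : ∑ i ∈ I1, u i = ∑ i ∈ I2, u i := by
          rw [hv, dot_sub', dot_sum_right, dot_sum_right] at hker
          linarith
        have hrep : u = (∑ j ∈ I1.erase i0, u j • (E j - E i0)) +
            ∑ j ∈ I2, u j • (E i0 + E j) := by
          funext k
          simp only [Pi.add_apply, Finset.sum_apply, Pi.smul_apply, Pi.sub_apply,
            smul_eq_mul, E, Pi.single_apply]
          by_cases hk0 : k = i0
          · subst hk0
            have e1 : ∀ j ∈ I1.erase k,
                u j * ((if k = j then (1:ℝ) else 0) - if k = k then 1 else 0) = -u j := by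
              intro j hj
              have : k ≠ j := by rintro rfl; exact (Finset.mem_erase.mp hj).1 rfl
              simp [this]
            have e2 : ∀ j ∈ I2,
                u j * ((if k = k then (1:ℝ) else 0) + if k = j then 1 else 0) = u j := by
              intro j hj
              have : k ≠ j := by rintro rfl; exact Finset.disjoint_left.mp hd hi0 hj
              simp [this]
            rw [Finset.sum_congr rfl e1, Finset.sum_congr rfl e2, Finset.sum_neg_distrib]
            have := Finset.add_sum_erase I1 u hi0
            linarith [hsum, this]
          · have e1 : ∀ j ∈ I1.erase i0,
                u j * ((if k = j then (1:ℝ) else 0) - if k = i0 then 1 else 0)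
                = if k = j then u j else 0 := by
              intro j hj; simp [hk0, mul_ite]
            have e2 : ∀ j ∈ I2,
                u j * ((if k = i0 then (1:ℝ) else 0) + if k = j then 1 else 0)
                = if k = j then u j else 0 := by
              intro j hj; simp [hk0, mul_ite]
            rw [Finset.sum_congr rfl e1, Finset.sum_congr rfl e2,
              Finset.sum_ite_eq, Finset.sum_ite_eq]
            by_cases hk1 : k ∈ I1
            · have : k ∈ I1.erase i0 := Finset.mem_erase.mpr ⟨hk0, hk1⟩
              have hk2 : k ∉ I2 := Finset.disjoint_left.mp hd hk1
              simp [this, hk2]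
            · by_cases hk2 : k ∈ I2
              · simp [hk1, hk2, fun h => hk1 (Finset.mem_erase.mp h).2]
              · simp [hk2, fun h => hk1 (Finset.mem_erase.mp h).2,
                  hsupp k (by simp [hk1, hk2])]
        rw [hrep]
        apply add_mem
        · apply Submodule.sum_mem
          intro j hj
          exact Submodule.smul_mem _ _ (Submodule.subset_span
            (Or.inl ⟨j, (Finset.mem_erase.mp hj).2, i0, hi0, (Finset.mem_erase.mp hj).1, rfl⟩))
        · apply Submodule.sum_mem
          intro j hj
          exact Submodule.smul_mem _ _ (Submodule.subset_span
            (Or.inr (Or.inr ⟨i0, hi0, j, hj, Or.inl rfl⟩)))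
    have hind : LinearIndependent ℝ
        ((↑) : (E '' ↑(I1 ∪ I2) : Set (Fin n → ℝ)) → (Fin n → ℝ)) :=
      LinearIndepOn.id_image (v := E) (s := ((I1 ∪ I2 : Finset (Fin n)) : Set (Fin n)))
        (E_li.comp Subtype.val Subtype.val_injective)
    have hind' : LinearIndependent ℝ
        ((↑) : ((s : Finset (Fin n → ℝ)) : Set (Fin n → ℝ)) → (Fin n → ℝ)) := by
      rw [hs, Finset.coe_image]; exact hind
    have hWrank : Module.finrank ℝ W = I1.card + I2.card := by
      rw [hW, finrank_span_finset_eq_card hind', hs, Finset.card_image_of_injective _ E_inj,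
        Finset.card_union_of_disjoint hd]
    have hsurj : LinearMap.range ((dotL v).domRestrict W) = ⊤ := by
      rw [LinearMap.range_eq_top]
      intro r
      refine ⟨r • ⟨E i0, hEW i0 (by simp [hi0])⟩, ?_⟩
      show (dotL v) (r • E i0) = r
      show dot (r • E i0) v = r
      rw [dot_smul_left, dot_comm, dot_E, hv1 i0 hi0, mul_one]
    have hrn := LinearMap.finrank_range_add_finrank_ker ((dotL v).domRestrict W)
    rw [hsurj, finrank_top, Module.finrank_self] at hrn
    have hker_eq : Module.finrank ℝ (LinearMap.ker ((dotL v).domRestrict W))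
        = Module.finrank ℝ (W ⊓ LinearMap.ker (dotL v) : Submodule ℝ (Fin n → ℝ)) := by
      rw [LinearMap.ker_domRestrict, ← Submodule.finrank_map_subtype_eq,
        Submodule.map_comap_subtype]
    rw [hspan, ← hker_eq]
    omega
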